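/- Let {b_k} be a binary sequence (each b_k ∈ {0,1}). Define polynomial sequences s_k, t_k in ℤ[z] by s_{−1} = 1, t_{−1} = 0, s_k = (1 − b_k)·s_{k−1} + z^{2^k}·[b_k·(s_{k−1} − t_{k−1}) + t_{k−1}], and t_k = b_k·s_{k−1} + t_{k−1}. Then for all m ≥ 0 and all n ≥ 0, a(2^{m+1}·n + Σ_{j=0}^{m} 2^j b_j ; z) = s_m(z)·a(n; z^{2^{m+1}}) + t_m(z)·a(n+1; z^{2^{m+1}}). -/
import Mathlib


open Polynomial

/-- The Stern polynomials: a(0;z)=0, a(1;z)=1, a(2n;z)=a(n;z^2),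
    a(2n+1;z)=z*a(n;z^2)+a(n+1;z^2). -/
noncomputable def stern : ℕ → Polynomial ℤ
  | 0 => 0
  | 1 => 1
  | (n+2) =>
    if _h : n % 2 = 0 then (stern (n/2+1)).comp (X^2)
    else X * (stern (n/2+1)).comp (X^2) + (stern (n/2+2)).comp (X^2)
  decreasing_by all_goals omega

lemma stern_even (n : ℕ) : stern (2*n) = (stern n).comp (X^2) := by
  cases n with
  | zero => simp [stern]
  | succ k =>
    have h : 2*(k+1) = (2*k) + 2 := by ring
    rw [h, stern]
    have : 2*k % 2 = 0 := by omega
    rw [dif_pos this]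
    congr 2
    omega

lemma stern_odd (n : ℕ) :
    stern (2*n+1) = X * (stern n).comp (X^2) + (stern (n+1)).comp (X^2) := by
  cases n with
  | zero => simp [stern]
  | succ k =>
    have h : 2*(k+1)+1 = (2*k+1) + 2 := by ring
    rw [h, stern]
    have : ¬ (2*k+1) % 2 = 0 := by omega
    rw [dif_neg this]
    have h1 : (2*k+1)/2 + 1 = k + 1 := by omega
    have h2 : (2*k+1)/2 + 2 = k + 2 := by omega
    rw [h1, h2]

lemma comp_X_pow (p : Polynomial ℤ) (m : ℕ) :
    (p.comp (X^2)).comp (X^(2^(m+1))) = p.comp (X^(2^(m+2))) := by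
  rw [Polynomial.comp_assoc, pow_comp, X_comp, ← pow_mul, ← pow_succ]

theorem stern_smtm
    (b : ℕ → ℕ) (hb : ∀ k, b k = 0 ∨ b k = 1)
    (s t : ℕ → Polynomial ℤ)
    (hs0 : s 0 = 1) (ht0 : t 0 = 0)
    (hs : ∀ k, s (k+1) = C (1 - (b k : ℤ)) * s k + X^(2^k) * (C (b k : ℤ) * (s k - t k) + t k))
    (ht : ∀ k, t (k+1) = C (b k : ℤ) * s k + t k) :
    ∀ m n : ℕ,
      stern (2^(m+1) * n + ∑ j ∈ Finset.range (m+1), 2^j * b j) =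
        s (m+1) * (stern n).comp (X^(2^(m+1))) +
        t (m+1) * (stern (n+1)).comp (X^(2^(m+1))) := by
  intro m
  induction m with
  | zero =>
    intro n
    rw [hs 0, ht 0, hs0, ht0, Finset.sum_range_one]
    rcases hb 0 with h | h <;> rw [h]
    · norm_num
      exact stern_even n
    · norm_num
      exact stern_odd n
  | succ m ih =>
    intro n
    have hkey : 2^(m+1+1) * n + ∑ j ∈ Finset.range (m+1+1), 2^j * b j =
        2^(m+1) * (2*n + b (m+1)) + ∑ j ∈ Finset.range (m+1), 2^j * b j := by
      rw [Finset.sum_range_succ]; ring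
    rw [hkey, ih (2*n + b (m+1))]
    rcases hb (m+1) with h | h <;> rw [h]
    · simp only [Nat.add_zero]
      rw [stern_even, show 2*n+1 = 2*n+1 from rfl, stern_odd]
      rw [hs (m+1), ht (m+1), h]
      rw [comp_X_pow, add_comp, mul_comp, X_comp, comp_X_pow, comp_X_pow]
      push_cast
      simp only [map_one, map_zero, sub_zero, sub_self, zero_mul, zero_add, one_mul]
      ring
    · rw [show 2*n + 1 = 2*n+1 from rfl, stern_odd,
        show 2*n+1+1 = 2*(n+1) from by ring, stern_even]
      rw [hs (m+1), ht (m+1), h]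
      rw [comp_X_pow, add_comp, mul_comp, X_comp, comp_X_pow, comp_X_pow]
      push_cast
      simp only [map_one, map_zero, sub_zero, sub_self, zero_mul, zero_add, one_mul]
      ring
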